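/- Let $\pi\propto e^{-U}$ on $\mathbb{R}^d$ with $U$ $m$-strongly convex, and $P$ the RWM kernel with proposal $\mathcal{N}(x,\sigma^2 I_d)$. Then the conductance satisfies $\Phi_P^* := \inf\{(\pi\otimes P)(A\times A^\complement)/\pi(A) : 0 < \pi(A)\le 1/2\} \le (1+m\sigma^2)^{-d/2}$. -/

import Mathlib

open MeasureTheory Real
open scoped ENNReal RealInnerProductSpace

noncomputable section

abbrev Evec (d : ℕ) := EuclideanSpace ℝ (Fin d)

def gaussDensity (d : ℕ) (m : Evec d) (s : ℝ) (x : Evec d) : ℝ :=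
  (2 * π * s) ^ (-(d : ℝ) / 2) * Real.exp (-‖x - m‖ ^ 2 / (2 * s))

/-- The standard Gaussian measure `𝒩(0, I_d)` on `ℝ^d`. -/
def stdGauss (d : ℕ) : Measure (Evec d) :=
  volume.withDensity fun z => ENNReal.ofReal (gaussDensity d 0 1 z)

/-- The normalized target probability measure `π ∝ e^{-U}`. -/
def targetProb (d : ℕ) (U : Evec d → ℝ) : Measure (Evec d) :=
  ((volume.withDensity fun x => ENNReal.ofReal (Real.exp (-U x))) Set.univ)⁻¹ •
    (volume.withDensity fun x => ENNReal.ofReal (Real.exp (-U x)))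

section Aux
variable {V : Type*} [NormedAddCommGroup V] [InnerProductSpace ℝ V] [FiniteDimensional ℝ V]
  [MeasurableSpace V] [BorelSpace V]

lemma real_gauss_lin {b : ℝ} (hb : 0 < b) (c : ℝ) (w : V) :
    ∫ v : V, rexp (-b * ‖v‖ ^ 2 + c * ⟪w, v⟫) =
      (π / b) ^ ((Module.finrank ℝ V : ℝ) / 2) * rexp (c ^ 2 * ‖w‖ ^ 2 / (4 * b)) := by
  rw [← Complex.ofReal_inj]
  have key := GaussianFourier.integral_cexp_neg_mul_sq_norm_add (V := V)
    (show 0 < (b : ℂ).re from hb) (c : ℂ) w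
  have h1 : Complex.ofReal (∫ v : V, rexp (-b * ‖v‖ ^ 2 + c * ⟪w, v⟫)) =
      ∫ v : V, Complex.exp (-(b:ℂ) * ‖v‖ ^ 2 + (c:ℂ) * ⟪w, v⟫) := by
    change Complex.ofRealLI (∫ v : V, rexp (-b * ‖v‖ ^ 2 + c * ⟪w, v⟫)) = _
    rw [← Complex.ofRealLI.integral_comp_comm]
    simp [Complex.ofRealLI, Complex.ofReal_exp]
    refine integral_congr_ae (Filter.Eventually.of_forall fun v => ?_)
    show ((rexp _ : ℝ) : ℂ) = _
    rw [Complex.ofReal_exp]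
    push_cast
    ring_nf
  rw [h1, key, Complex.ofReal_mul, ← Complex.ofReal_div,
    Complex.ofReal_cpow (by positivity)]
  congr 1
  · push_cast
    rfl
  · rw [Complex.ofReal_exp]
    push_cast
    rfl

lemma real_gauss_integrable {b : ℝ} (hb : 0 < b) (c : ℝ) (w : V) :
    Integrable (fun v : V => rexp (-b * ‖v‖ ^ 2 + c * ⟪w, v⟫)) := by
  have h := (GaussianFourier.integrable_cexp_neg_mul_sq_norm_add (V := V)
      (show 0 < (b:ℂ).re from hb) (c : ℂ) w).norm
  have he : (fun v : V => ‖Complex.exp (-(b:ℂ) * ‖v‖ ^ 2 + (c:ℂ) * ⟪w, v⟫)‖) =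
      fun v => rexp (-b * ‖v‖ ^ 2 + c * ⟪w, v⟫) := by
    funext v
    have : (-(b:ℂ) * ‖v‖ ^ 2 + (c:ℂ) * ⟪w, v⟫) = ((-b * ‖v‖ ^ 2 + c * ⟪w, v⟫ : ℝ) : ℂ) := by
      push_cast; ring
    rw [this, Complex.norm_exp, Complex.ofReal_re]
  rwa [he] at h

end Aux

lemma gaussDensity_nonneg (d : ℕ) (z : Evec d) : 0 ≤ gaussDensity d 0 1 z := by
  unfold gaussDensity; positivity

lemma gaussDensity_cont (d : ℕ) : Continuous fun z : Evec d => gaussDensity d 0 1 z := by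
  unfold gaussDensity; fun_prop

lemma stdGauss_key {d : ℕ} {t : ℝ} (ht : 0 < t) (c : ℝ) (w : Evec d) :
    Integrable (fun z : Evec d => rexp (c * ⟪w, z⟫ - t / 2 * ‖z‖ ^ 2))
        (stdGauss d) ∧
    ∫ z, rexp (c * ⟪w, z⟫ - t / 2 * ‖z‖ ^ 2) ∂stdGauss d
      = (1 + t) ^ (-(d:ℝ) / 2) * rexp (c ^ 2 * ‖w‖ ^ 2 / (2 * (1 + t))) := by
  have ht1 : (0:ℝ) < 1 + t := by linarith
  have hb : (0:ℝ) < (1 + t) / 2 := by linarith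
  have hmeas : Measurable fun z : Evec d => (gaussDensity d 0 1 z).toNNReal :=
    (gaussDensity_cont d).measurable.real_toNNReal
  have hd : (fun z : Evec d => ENNReal.ofReal (gaussDensity d 0 1 z)) =
      fun z => ((gaussDensity d 0 1 z).toNNReal : ℝ≥0∞) := rfl
  have hsmul : ∀ z : Evec d, (gaussDensity d 0 1 z).toNNReal •
        rexp (c * ⟪w, z⟫ - t / 2 * ‖z‖ ^ 2)
      = (2 * π) ^ (-(d:ℝ) / 2) * rexp (-((1 + t) / 2) * ‖z‖ ^ 2 + c * ⟪w, z⟫) := by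
    intro z
    rw [NNReal.smul_def, Real.coe_toNNReal _ (gaussDensity_nonneg d z)]
    unfold gaussDensity
    rw [mul_one, sub_zero, smul_eq_mul, mul_assoc, ← Real.exp_add]
    congr 2
    ring
  have hint : Integrable (fun z : Evec d =>
      (2 * π) ^ (-(d:ℝ) / 2) * rexp (-((1 + t) / 2) * ‖z‖ ^ 2 + c * ⟪w, z⟫)) :=
    (real_gauss_integrable hb c w).const_mul _
  constructor
  · rw [stdGauss, hd, integrable_withDensity_iff_integrable_smul hmeas]
    exact hint.congr (by filter_upwards with z using (hsmul z).symm)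
  · rw [stdGauss, hd, integral_withDensity_eq_integral_smul hmeas]
    simp_rw [hsmul]
    rw [integral_const_mul, real_gauss_lin hb c w, finrank_euclideanSpace_fin]
    have h2π : (0:ℝ) < 2 * π := by positivity
    have hpow : (2 * π) ^ (-(d:ℝ) / 2) * (π / ((1 + t) / 2)) ^ ((d:ℝ) / 2)
        = (1 + t) ^ (-(d:ℝ) / 2) := by
      have h1 : π / ((1 + t) / 2) = (2 * π) / (1 + t) := by field_simp
      rw [h1, Real.div_rpow h2π.le ht1.le, neg_div, Real.rpow_neg h2π.le,
        Real.rpow_neg ht1.le]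
      field_simp
    have hexp : c ^ 2 * ‖w‖ ^ 2 / (4 * ((1 + t) / 2)) = c ^ 2 * ‖w‖ ^ 2 / (2 * (1 + t)) := by
      ring_nf
    rw [← mul_assoc, hpow, hexp]

section TP
variable {d : ℕ} {U : Evec d → ℝ}

lemma dens_meas (hUm : Measurable U) :
    Measurable fun x : Evec d => ENNReal.ofReal (Real.exp (-U x)) :=
  (measurable_exp.comp hUm.neg).ennreal_ofReal

lemma Z_lt_top (hint : Integrable fun x => Real.exp (-U x)) :
    (volume.withDensity fun x : Evec d =>
    ENNReal.ofReal (Real.exp (-U x))) Set.univ < ⊤ := by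
  rw [withDensity_apply _ MeasurableSet.univ, Measure.restrict_univ]
  exact hint.lintegral_lt_top

lemma Z_pos (hUm : Measurable U) : 0 < (volume.withDensity fun x : Evec d =>
    ENNReal.ofReal (Real.exp (-U x))) Set.univ := by
  rw [withDensity_apply _ MeasurableSet.univ, Measure.restrict_univ]
  rw [pos_iff_ne_zero]
  intro h
  rw [lintegral_eq_zero_iff (dens_meas hUm)] at h
  rw [Filter.EventuallyEq, ae_iff] at h
  have he : {x : Evec d | ¬ ENNReal.ofReal (Real.exp (-U x)) = (0 : Evec d → ℝ≥0∞) x}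
      = Set.univ := by
    rw [Set.eq_univ_iff_forall]
    intro x
    simp [ENNReal.ofReal_eq_zero, not_le, Real.exp_pos]
  rw [he] at h
  have := (isOpen_univ (X := Evec d)).measure_pos volume Set.univ_nonempty
  simp [h] at this

lemma targetProb_isProb (hUm : Measurable U) (hint : Integrable fun x => Real.exp (-U x)) :
    IsProbabilityMeasure (targetProb d U) := by
  constructor
  rw [targetProb, Measure.smul_apply, smul_eq_mul]
  exact ENNReal.inv_mul_cancel (Z_pos hUm).ne' (Z_lt_top hint).ne

lemma targetProb_pos_of_ball (hUm : Measurable U) (hint : Integrable fun x => Real.exp (-U x))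
    {x₀ : Evec d} {r : ℝ} (hr : 0 < r) :
    0 < targetProb d U (Metric.ball x₀ r) := by
  rw [targetProb, Measure.smul_apply, smul_eq_mul, pos_iff_ne_zero]
  intro h
  rcases mul_eq_zero.1 h with h | h
  · exact (ENNReal.inv_ne_zero.2 (Z_lt_top hint).ne) h
  · rw [withDensity_apply_eq_zero (dens_meas hUm)] at h
    have he : {x : Evec d | ENNReal.ofReal (Real.exp (-U x)) ≠ 0} ∩ Metric.ball x₀ r
        = Metric.ball x₀ r := by
      ext x
      simp [ENNReal.ofReal_eq_zero, not_le, Real.exp_pos]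
    rw [he] at h
    exact (Metric.measure_ball_pos volume x₀ hr).ne' h

lemma targetProb_singleton (hd : 0 < d) (x₀ : Evec d) : targetProb d U {x₀} = 0 := by
  have : Nontrivial (Evec d) := by
    have : Nonempty (Fin d) := ⟨⟨0, hd⟩⟩
    infer_instance
  rw [targetProb, Measure.smul_apply, smul_eq_mul]
  have h : (volume.withDensity fun x : Evec d => ENNReal.ofReal (Real.exp (-U x))) {x₀} = 0 :=
    withDensity_absolutelyContinuous _ _ (measure_singleton x₀)
  rw [h, mul_zero]

end TP
section Geom
variable {d : ℕ} {m : ℝ} {U : Evec d → ℝ}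

lemma grad_meas (hU : Differentiable ℝ U) : Measurable fun x : Evec d => gradient U x := by
  have h1 : Measurable fun x : Evec d => fderiv ℝ U x := measurable_fderiv ℝ U
  exact ((InnerProductSpace.toDual ℝ (Evec d)).symm.continuous.measurable).comp h1

lemma subgrad (hm : 0 < m)
    (hconv : ∀ x h : Evec d, m / 2 * ‖h‖ ^ 2 ≤ U (x + h) - U x - ⟪gradient U x, h⟫) :
    ∀ x h : Evec d, ⟪gradient U x, h⟫ ≤ U (x + h) - U x := by
  intro x h
  have := hconv x h
  nlinarith [sq_nonneg ‖h‖, norm_nonneg h]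

lemma exists_min (hm : 0 < m) (hU : Differentiable ℝ U)
    (hconv : ∀ x h : Evec d, m / 2 * ‖h‖ ^ 2 ≤ U (x + h) - U x - ⟪gradient U x, h⟫) :
    ∃ x₀ : Evec d, ∀ x, U x₀ ≤ U x := by
  set R : ℝ := 2 * ‖gradient U 0‖ / m + 1 with hR
  have hRpos : 0 < R := by positivity
  obtain ⟨x₀, hx₀mem, hx₀⟩ := (isCompact_closedBall (0 : Evec d) R).exists_isMinOn
    ⟨0, Metric.mem_closedBall_self hRpos.le⟩ hU.continuous.continuousOn
  refine ⟨x₀, fun x => ?_⟩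
  by_cases hx : x ∈ Metric.closedBall (0 : Evec d) R
  · exact hx₀ hx
  · have hxn : R ≤ ‖x‖ := by
      by_contra hc
      push_neg at hc
      exact hx (by simpa [Metric.mem_closedBall, dist_zero_right] using hc.le)
    have h1 := hconv 0 x
    rw [zero_add] at h1
    have h2 : -(‖gradient U 0‖ * ‖x‖) ≤ ⟪gradient U 0, x⟫ :=
      neg_le_of_abs_le (abs_real_inner_le_norm _ _)
    have hRm : m * R = 2 * ‖gradient U 0‖ + m := by
      rw [hR]; field_simp
    have h3 : U 0 ≤ U x := by
      nlinarith [mul_le_mul_of_nonneg_left hxn hm.le, norm_nonneg x,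
        norm_nonneg (gradient U 0), hRpos]
    exact le_trans (hx₀ (Metric.mem_closedBall_self hRpos.le)) h3

lemma grad_zero_of_min (hU : Differentiable ℝ U) {x₀ : Evec d} (hx₀ : ∀ x, U x₀ ≤ U x) :
    gradient U x₀ = 0 := by
  have hloc : IsLocalMin U x₀ := Filter.Eventually.of_forall hx₀
  have : fderiv ℝ U x₀ = 0 := hloc.fderiv_eq_zero
  rw [gradient, this, map_zero]

lemma small_grad_ball (hm : 0 < m) (hU : Differentiable ℝ U)
    (hconv : ∀ x h : Evec d, m / 2 * ‖h‖ ^ 2 ≤ U (x + h) - U x - ⟪gradient U x, h⟫)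
    {x₀ : Evec d} (hx₀ : ∀ x, U x₀ ≤ U x) {ε : ℝ} (hε : 0 < ε) :
    ∃ r > 0, ∀ x ∈ Metric.ball x₀ r, ‖gradient U x‖ ≤ ε := by
  have hgrad : HasFDerivAt U (0 : Evec d →L[ℝ] ℝ) x₀ := by
    have h1 := (hU x₀).hasFDerivAt
    have hloc : IsLocalMin U x₀ := Filter.Eventually.of_forall hx₀
    rwa [hloc.fderiv_eq_zero] at h1
  have hlo := hgrad.isLittleO
  have hev := (hlo.def (show (0:ℝ) < ε / 4 by linarith)).and
    (Metric.eventually_nhds_iff_ball.2 ⟨1, one_pos, fun y _ => trivial⟩)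
  rw [Metric.eventually_nhds_iff_ball] at hev
  obtain ⟨r', hr', hball⟩ := hev
  refine ⟨r' / 2, by linarith, fun x hx => ?_⟩
  by_cases hg : gradient U x = 0
  · rw [hg, norm_zero]; exact hε.le
  · set g := gradient U x with hgdef
    have hgn : 0 < ‖g‖ := norm_pos_iff.2 hg
    set h : Evec d := (r' / 2 / ‖g‖) • g with hh
    have hhn : ‖h‖ = r' / 2 := by
      rw [hh, norm_smul, Real.norm_eq_abs, abs_div,
        abs_of_pos (show (0:ℝ) < r' / 2 by linarith), abs_of_pos hgn]
      field_simp
    have hxh : x + h ∈ Metric.ball x₀ r' := by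
      rw [Metric.mem_ball] at hx ⊢
      calc dist (x + h) x₀ ≤ dist (x + h) x + dist x x₀ := dist_triangle _ _ _
        _ < r' / 2 + r' / 2 := by
            rw [dist_eq_norm, add_sub_cancel_left, hhn]
            exact add_lt_add_of_le_of_lt le_rfl hx
        _ = r' := by ring
    have hUb : U (x + h) - U x₀ ≤ ε / 4 * ‖x + h - x₀‖ := by
      have := (hball _ hxh).1
      simp only [ContinuousLinearMap.zero_apply, sub_zero, Real.norm_eq_abs] at this
      calc U (x + h) - U x₀ ≤ |U (x + h) - U x₀| := le_abs_self _
        _ ≤ ε / 4 * ‖x + h - x₀‖ := this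
    have hxd : ‖x + h - x₀‖ ≤ r' / 2 + r' / 2 := by
      calc ‖x + h - x₀‖ ≤ ‖h‖ + ‖x - x₀‖ := by
            have : x + h - x₀ = h + (x - x₀) := by abel
            rw [this]; exact norm_add_le _ _
        _ ≤ r' / 2 + r' / 2 := by
            rw [hhn]
            have := Metric.mem_ball.1 hx
            rw [dist_eq_norm] at this
            exact add_le_add le_rfl this.le
    have hsub : ⟪g, h⟫ ≤ U (x + h) - U x := subgrad hm hconv x h
    have hinner : ⟪g, h⟫ = r' / 2 * ‖g‖ := by
      rw [hh, real_inner_smul_right, real_inner_self_eq_norm_sq]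
      field_simp
    have hU0 : 0 ≤ U x - U x₀ := sub_nonneg.2 (hx₀ x)
    have : r' / 2 * ‖g‖ ≤ ε / 4 * (r' / 2 + r' / 2) := by
      rw [← hinner]
      calc ⟪g, h⟫ ≤ U (x + h) - U x := hsub
        _ ≤ U (x + h) - U x₀ := by linarith
        _ ≤ ε / 4 * ‖x + h - x₀‖ := hUb
        _ ≤ ε / 4 * (r' / 2 + r' / 2) := by
            apply mul_le_mul_of_nonneg_left hxd (by linarith)
    nlinarith

lemma grad_big_outside (hm : 0 < m)
    (hconv : ∀ x h : Evec d, m / 2 * ‖h‖ ^ 2 ≤ U (x + h) - U x - ⟪gradient U x, h⟫)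
    {x₀ : Evec d} (hg0 : gradient U x₀ = 0) {ε : ℝ} (hε : 0 ≤ ε) :
    {x : Evec d | ‖gradient U x‖ ≤ ε} ⊆ Metric.closedBall x₀ (ε / m) := by
  intro x hx
  simp only [Set.mem_setOf_eq] at hx
  rw [Metric.mem_closedBall, dist_eq_norm]
  by_cases hxx : x = x₀
  · rw [hxx]; simp; positivity
  · have hne : 0 < ‖x - x₀‖ := by
      rw [norm_pos_iff, sub_ne_zero]; exact hxx
    have h1 := hconv x₀ (x - x₀)
    rw [add_sub_cancel, hg0] at h1
    simp only [inner_zero_left, sub_zero] at h1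
    have h2 := hconv x (x₀ - x)
    rw [add_sub_cancel] at h2
    have hnn : ‖x₀ - x‖ = ‖x - x₀‖ := norm_sub_rev _ _
    rw [hnn] at h2
    have hsum : m * ‖x - x₀‖ ^ 2 ≤ - ⟪gradient U x, x₀ - x⟫ := by linarith
    have h3 : - ⟪gradient U x, x₀ - x⟫ = ⟪gradient U x, x - x₀⟫ := by
      rw [← inner_neg_right]
      congr 1
      abel
    rw [h3] at hsum
    have h4 : ⟪gradient U x, x - x₀⟫ ≤ ‖gradient U x‖ * ‖x - x₀‖ :=
      real_inner_le_norm _ _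
    have h5 : m * ‖x - x₀‖ ^ 2 ≤ ε * ‖x - x₀‖ := by
      calc m * ‖x - x₀‖ ^ 2 ≤ ‖gradient U x‖ * ‖x - x₀‖ := le_trans hsum h4
        _ ≤ ε * ‖x - x₀‖ := mul_le_mul_of_nonneg_right hx hne.le
    rw [le_div_iff₀ hm]
    nlinarith

end Geom
lemma small_ball_half {X : Type*} [MetricSpace X] [MeasurableSpace X] [OpensMeasurableSpace X]
    (μ : Measure X) [IsProbabilityMeasure μ] (x₀ : X) (h0 : μ {x₀} = 0) :
    ∃ r₀ > (0:ℝ), μ (Metric.closedBall x₀ r₀) ≤ 1 / 2 := by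
  have hmono : Antitone fun n : ℕ => Metric.closedBall x₀ (1 / (n + 1)) := by
    intro a b hab
    apply Metric.closedBall_subset_closedBall
    apply one_div_le_one_div_of_le (by positivity)
    linarith [(Nat.cast_le.2 hab : (a:ℝ) ≤ b)]
  have hinter : ⋂ n : ℕ, Metric.closedBall x₀ (1 / ((n : ℝ) + 1)) = {x₀} := by
    ext x
    simp only [Set.mem_iInter, Metric.mem_closedBall, Set.mem_singleton_iff]
    constructor
    · intro h
      rw [← dist_le_zero (y := x₀)]
      by_contra hc
      push_neg at hc
      obtain ⟨n, hn⟩ := exists_nat_one_div_lt hc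
      exact absurd (h n) (by push_neg; exact_mod_cast hn)
    · intro h
      intro n
      rw [h, dist_self]
      positivity
  have htend := MeasureTheory.tendsto_measure_iInter_atTop
    (fun n => (Metric.isClosed_closedBall.measurableSet).nullMeasurableSet) hmono
    ⟨0, measure_ne_top μ _⟩
  rw [hinter, h0] at htend
  have hev := htend.eventually_le_const (by norm_num : (0:ℝ≥0∞) < 1/2)
  obtain ⟨n, hn⟩ := hev.exists
  exact ⟨1 / (n + 1), by positivity, hn⟩

lemma inner_int_bound {d : ℕ} {m σ : ℝ} (hm : 0 < m) (hσ : 0 < σ) {U : Evec d → ℝ}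
    (hconv : ∀ x h : Evec d, m / 2 * ‖h‖ ^ 2 ≤ U (x + h) - U x - ⟪gradient U x, h⟫)
    (A : Set (Evec d)) (x : Evec d) :
    ∫ z, Set.indicator Aᶜ (fun _ => (1 : ℝ)) (x + σ • z) *
        min 1 (Real.exp (-(U (x + σ • z) - U x))) ∂stdGauss d
      ≤ (1 + m * σ ^ 2) ^ (-(d : ℝ) / 2) *
        Real.exp (σ ^ 2 * ‖gradient U x‖ ^ 2 / (2 * (1 + m * σ ^ 2))) := by
  have ht : 0 < m * σ ^ 2 := by positivity
  obtain ⟨hIg, heq⟩ := stdGauss_key (d := d) ht (-σ) (gradient U x)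
  have hnn : ∀ z : Evec d, 0 ≤ Set.indicator Aᶜ (fun _ => (1:ℝ)) (x + σ • z) *
      min 1 (Real.exp (-(U (x + σ • z) - U x))) := by
    intro z
    apply mul_nonneg
    · apply Set.indicator_nonneg; intro _ _; norm_num
    · exact le_min (by norm_num) (Real.exp_pos _).le
  have hbd : ∀ z : Evec d, Set.indicator Aᶜ (fun _ => (1:ℝ)) (x + σ • z) *
      min 1 (Real.exp (-(U (x + σ • z) - U x)))
      ≤ rexp ((-σ) * ⟪gradient U x, z⟫ - (m * σ ^ 2) / 2 * ‖z‖ ^ 2) := by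
    intro z
    have h1 : Set.indicator Aᶜ (fun _ => (1:ℝ)) (x + σ • z) ≤ 1 := by
      classical
      rw [Set.indicator_apply]
      split <;> norm_num
    have hminnn : 0 ≤ min 1 (Real.exp (-(U (x + σ • z) - U x))) :=
      le_min (by norm_num) (Real.exp_pos _).le
    have h2 : Set.indicator Aᶜ (fun _ => (1:ℝ)) (x + σ • z) *
        min 1 (Real.exp (-(U (x + σ • z) - U x)))
        ≤ min 1 (Real.exp (-(U (x + σ • z) - U x))) :=
      mul_le_of_le_one_left hminnn h1
    have h3 := hconv x (σ • z)
    have hsm : ⟪gradient U x, σ • z⟫ = σ * ⟪gradient U x, z⟫ := real_inner_smul_right _ _ _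
    have hns : ‖σ • z‖ ^ 2 = σ ^ 2 * ‖z‖ ^ 2 := by
      rw [norm_smul, Real.norm_eq_abs, mul_pow, sq_abs]
    rw [hsm, hns] at h3
    have h4 : -(U (x + σ • z) - U x) ≤ (-σ) * ⟪gradient U x, z⟫ - (m * σ ^ 2) / 2 * ‖z‖ ^ 2 := by
      nlinarith
    calc Set.indicator Aᶜ (fun _ => (1:ℝ)) (x + σ • z) *
        min 1 (Real.exp (-(U (x + σ • z) - U x)))
        ≤ min 1 (Real.exp (-(U (x + σ • z) - U x))) := h2
      _ ≤ Real.exp (-(U (x + σ • z) - U x)) := min_le_right _ _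
      _ ≤ rexp ((-σ) * ⟪gradient U x, z⟫ - (m * σ ^ 2) / 2 * ‖z‖ ^ 2) := Real.exp_le_exp.2 h4
  calc ∫ z, Set.indicator Aᶜ (fun _ => (1 : ℝ)) (x + σ • z) *
        min 1 (Real.exp (-(U (x + σ • z) - U x))) ∂stdGauss d
      ≤ ∫ z, rexp ((-σ) * ⟪gradient U x, z⟫ - (m * σ ^ 2) / 2 * ‖z‖ ^ 2) ∂stdGauss d :=
        integral_mono_of_nonneg (Filter.Eventually.of_forall hnn) hIg
          (Filter.Eventually.of_forall hbd)
    _ = (1 + m * σ ^ 2) ^ (-(d : ℝ) / 2) *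
        Real.exp (σ ^ 2 * ‖gradient U x‖ ^ 2 / (2 * (1 + m * σ ^ 2))) := by
        rw [heq]
        congr 1
        ring_nf

/-- The conductance `Φ_P^*` of the RWM kernel with proposal `𝒩(x, σ² I_d)`, written via
the explicit form `(π⊗P)(A×Aᶜ) = ∫_A ∫ 1_{Aᶜ}(x+σz) α(x,x+σz) 𝒩(dz) π(dx)`. -/
def rwmConductance (d : ℕ) (U : Evec d → ℝ) (σ : ℝ) : ℝ :=
  sInf {r | ∃ A : Set (Evec d), MeasurableSet A ∧ 0 < targetProb d U A ∧
    targetProb d U A ≤ 1 / 2 ∧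
    r = (∫ x in A, ∫ z, Set.indicator Aᶜ (fun _ => (1 : ℝ)) (x + σ • z) *
          min 1 (Real.exp (-(U (x + σ • z) - U x))) ∂stdGauss d ∂targetProb d U) /
        (targetProb d U A).toReal}

theorem stmt12 {d : ℕ} (m σ : ℝ) (hm : 0 < m) (hσ : 0 < σ)
    (U : Evec d → ℝ) (hU : Differentiable ℝ U)
    (hconv : ∀ x h : Evec d, m / 2 * ‖h‖ ^ 2 ≤ U (x + h) - U x - ⟪gradient U x, h⟫)
    (hint : Integrable fun x => Real.exp (-U x)) :
    rwmConductance d U σ ≤ (1 + m * σ ^ 2) ^ (-(d : ℝ) / 2) := by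
  have hUm : Measurable U := hU.continuous.measurable
  haveI hprob : IsProbabilityMeasure (targetProb d U) := targetProb_isProb hUm hint
  have hCpos : 0 < (1 + m * σ ^ 2) ^ (-(d : ℝ) / 2) :=
    Real.rpow_pos_of_pos (by positivity) _
  set C : ℝ := (1 + m * σ ^ 2) ^ (-(d : ℝ) / 2) with hCdef
  -- nonnegativity of the inner integrand
  have hφnn : ∀ (A : Set (Evec d)) (x : Evec d),
      0 ≤ ∫ z, Set.indicator Aᶜ (fun _ => (1 : ℝ)) (x + σ • z) *
        min 1 (Real.exp (-(U (x + σ • z) - U x))) ∂stdGauss d := by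
    intro A x
    apply integral_nonneg
    intro z
    apply mul_nonneg
    · apply Set.indicator_nonneg; intro _ _; norm_num
    · exact le_min (by norm_num) (Real.exp_pos _).le
  have hbdd : BddBelow {r | ∃ A : Set (Evec d), MeasurableSet A ∧ 0 < targetProb d U A ∧
      targetProb d U A ≤ 1 / 2 ∧
      r = (∫ x in A, ∫ z, Set.indicator Aᶜ (fun _ => (1 : ℝ)) (x + σ • z) *
            min 1 (Real.exp (-(U (x + σ • z) - U x))) ∂stdGauss d ∂targetProb d U) /
          (targetProb d U A).toReal} := by
    refine ⟨0, fun r hr => ?_⟩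
    obtain ⟨A, hA, h1, h2, h3⟩ := hr
    rw [h3]
    apply div_nonneg _ ENNReal.toReal_nonneg
    apply integral_nonneg
    intro x
    exact hφnn A x
  by_cases hd : d = 0
  · subst hd
    have hempty : {r | ∃ A : Set (Evec 0), MeasurableSet A ∧ 0 < targetProb 0 U A ∧
        targetProb 0 U A ≤ 1 / 2 ∧
        r = (∫ x in A, ∫ z, Set.indicator Aᶜ (fun _ => (1 : ℝ)) (x + σ • z) *
              min 1 (Real.exp (-(U (x + σ • z) - U x))) ∂stdGauss 0 ∂targetProb 0 U) /
            (targetProb 0 U A).toReal} = ∅ := by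
      ext r
      simp only [Set.mem_setOf_eq, Set.mem_empty_iff_false, iff_false]
      rintro ⟨A, hA, h1, h2, h3⟩
      haveI hsub : Subsingleton (Evec 0) := ⟨fun a b => by ext i; exact i.elim0⟩
      have hne : A.Nonempty := nonempty_of_measure_ne_zero h1.ne'
      have hAuniv : A = Set.univ := by
        obtain ⟨a, ha⟩ := hne
        ext x
        simp only [Set.mem_univ, iff_true]
        rwa [Subsingleton.elim x a]
      rw [hAuniv, measure_univ] at h2
      norm_num at h2
    rw [rwmConductance, hempty, Real.sInf_empty]
    exact hCpos.le
  · have hdpos : 0 < d := Nat.pos_of_ne_zero hd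
    obtain ⟨x₀, hx₀⟩ := exists_min hm hU hconv
    have hg0 := grad_zero_of_min hU hx₀
    obtain ⟨r₀, hr₀, hhalf⟩ := small_ball_half (targetProb d U) x₀
      (targetProb_singleton hdpos x₀)
    apply le_of_forall_pos_le_add
    intro δ hδ
    have hδC : (0:ℝ) < 1 + δ / C := by positivity
    set L := Real.log (1 + δ / C) with hLdef
    have hLpos : 0 < L := Real.log_pos (by
      have : 0 < δ / C := div_pos hδ hCpos
      linarith)
    have hSpos : 0 < 2 * (1 + m * σ ^ 2) * L := by
      apply mul_pos (by positivity) hLpos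
    set ε : ℝ := min (m * r₀) (Real.sqrt (2 * (1 + m * σ ^ 2) * L) / σ) with hεdef
    have hεpos : 0 < ε :=
      lt_min (by positivity) (div_pos (Real.sqrt_pos.2 hSpos) hσ)
    obtain ⟨r, hr, hball⟩ := small_grad_ball hm hU hconv hx₀ hεpos
    set A := {x : Evec d | ‖gradient U x‖ ≤ ε} with hAdef
    have hAmeas : MeasurableSet A := measurableSet_le (grad_meas hU).norm measurable_const
    have hApos : 0 < targetProb d U A := by
      refine lt_of_lt_of_le (targetProb_pos_of_ball (x₀ := x₀) hUm hint hr) (measure_mono ?_)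
      intro x hx
      exact hball x hx
    have hAhalf : targetProb d U A ≤ 1 / 2 := by
      refine le_trans (measure_mono ?_) hhalf
      refine subset_trans (grad_big_outside hm hconv hg0 hεpos.le) ?_
      apply Metric.closedBall_subset_closedBall
      rw [div_le_iff₀ hm]
      calc ε ≤ m * r₀ := min_le_left _ _
        _ = r₀ * m := mul_comm _ _
    have hmem : (∫ x in A, ∫ z, Set.indicator Aᶜ (fun _ => (1 : ℝ)) (x + σ • z) *
          min 1 (Real.exp (-(U (x + σ • z) - U x))) ∂stdGauss d ∂targetProb d U) /
        (targetProb d U A).toReal ∈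
        {r | ∃ A : Set (Evec d), MeasurableSet A ∧ 0 < targetProb d U A ∧
          targetProb d U A ≤ 1 / 2 ∧
          r = (∫ x in A, ∫ z, Set.indicator Aᶜ (fun _ => (1 : ℝ)) (x + σ • z) *
                min 1 (Real.exp (-(U (x + σ • z) - U x))) ∂stdGauss d ∂targetProb d U) /
              (targetProb d U A).toReal} :=
      ⟨A, hAmeas, hApos, hAhalf, rfl⟩
    rw [rwmConductance]
    refine le_trans (csInf_le hbdd hmem) ?_
    set K := Real.exp (σ ^ 2 * ε ^ 2 / (2 * (1 + m * σ ^ 2))) with hKdef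
    have houter : ∀ x ∈ A, (∫ z, Set.indicator Aᶜ (fun _ => (1 : ℝ)) (x + σ • z) *
        min 1 (Real.exp (-(U (x + σ • z) - U x))) ∂stdGauss d) ≤ C * K := by
      intro x hx
      refine le_trans (inner_int_bound hm hσ hconv A x) ?_
      apply mul_le_mul_of_nonneg_left _ hCpos.le
      rw [hKdef]
      apply Real.exp_le_exp.2
      have hgx : ‖gradient U x‖ ≤ ε := hx
      gcongr
    have htReal : 0 < (targetProb d U A).toReal :=
      ENNReal.toReal_pos hApos.ne' (measure_ne_top _ A)
    have hnum : (∫ x in A, ∫ z, Set.indicator Aᶜ (fun _ => (1 : ℝ)) (x + σ • z) *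
          min 1 (Real.exp (-(U (x + σ • z) - U x))) ∂stdGauss d ∂targetProb d U)
        ≤ (C * K) * (targetProb d U A).toReal := by
      have h1 : (∫ x in A, ∫ z, Set.indicator Aᶜ (fun _ => (1 : ℝ)) (x + σ • z) *
            min 1 (Real.exp (-(U (x + σ • z) - U x))) ∂stdGauss d ∂targetProb d U)
          ≤ ∫ _x in A, C * K ∂targetProb d U := by
        apply integral_mono_of_nonneg
        · exact Filter.Eventually.of_forall fun x => hφnn A x
        · exact integrable_const _
        · exact (ae_restrict_iff' hAmeas).2 (Filter.Eventually.of_forall houter)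
      rw [setIntegral_const, smul_eq_mul, measureReal_def] at h1
      linarith [h1]
    have hKle : K ≤ 1 + δ / C := by
      have hε2 : ε ≤ Real.sqrt (2 * (1 + m * σ ^ 2) * L) / σ := min_le_right _ _
      have hσε : σ * ε ≤ Real.sqrt (2 * (1 + m * σ ^ 2) * L) := by
        rw [le_div_iff₀ hσ] at hε2
        linarith [hε2]
      have hsq : (σ * ε) ^ 2 ≤ 2 * (1 + m * σ ^ 2) * L := by
        calc (σ * ε) ^ 2 ≤ Real.sqrt (2 * (1 + m * σ ^ 2) * L) ^ 2 := by
              apply pow_le_pow_left₀ (by positivity) hσε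
          _ = 2 * (1 + m * σ ^ 2) * L := Real.sq_sqrt hSpos.le
      have harg : σ ^ 2 * ε ^ 2 / (2 * (1 + m * σ ^ 2)) ≤ L := by
        rw [div_le_iff₀ (by positivity)]
        nlinarith [hsq]
      rw [hKdef, ← Real.exp_log hδC]
      exact Real.exp_le_exp.2 harg
    refine le_trans ?_ (le_of_eq (show C * (1 + δ / C) = C + δ by field_simp))
    refine le_trans ?_ (mul_le_mul_of_nonneg_left hKle hCpos.le)
    rw [div_le_iff₀ htReal]
    exact hnum
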